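/- Let M, Q, J, R be real n×n matrices and G a real n×m matrix, where M and Q are symmetric positive definite, M and Q commute, J is skew-symmetric, and R is symmetric positive semidefinite. Then (i) the matrix M⁻¹Q is symmetric positive definite, and the function H̃(X̃) = ½ X̃ᵀ M⁻¹ Q X̃ has gradient ∇H̃(X̃) = M⁻¹ Q X̃; (ii) if X : ℝ → ℝⁿ is differentiable with M X'(t) = (J - R) Q X(t) + G U(t), then the transformed state X̃(t) = M X(t) satisfies the classical explicit port-Hamiltonian state space equations X̃'(t) = (J - R) ∇H̃(X̃(t)) + G U(t) with output Y(t) = Gᵀ ∇H̃(X̃(t)) = Gᵀ Q X(t), and H̃(X̃(t)) = ½ X(t)ᵀ Q M X(t) equals the original discrete Hamiltonian. -/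

import Mathlib

open Matrix

/-- The continuous linear functional `v ↦ w ⬝ᵥ v` on `ℝⁿ`; a gradient `w` viewed
as a Fréchet derivative. -/
noncomputable def dotCLM {n : ℕ} (w : Fin n → ℝ) : (Fin n → ℝ) →L[ℝ] ℝ :=
  LinearMap.toContinuousLinearMap
    { toFun := fun v => w ⬝ᵥ v
      map_add' := fun u v => dotProduct_add w u v
      map_smul' := by
        intro c v
        simp [dotProduct, Finset.mul_sum, mul_left_comm] }

@[simp] lemma dotCLM_apply {n : ℕ} (w v : Fin n → ℝ) : dotCLM w v = w ⬝ᵥ v := rfl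

/-- The continuous bilinear map `(u, v) ↦ (A *ᵥ u) ⬝ᵥ v`. -/
noncomputable def bilinCLM {n : ℕ} (A : Matrix (Fin n) (Fin n) ℝ) :
    (Fin n → ℝ) →L[ℝ] (Fin n → ℝ) →L[ℝ] ℝ :=
  LinearMap.toContinuousLinearMap
    { toFun := fun u => dotCLM (A.mulVec u)
      map_add' := by
        intro u v
        ext h
        simp [Matrix.mulVec_add, add_dotProduct]
      map_smul' := by
        intro c u
        ext h
        simp [Matrix.mulVec_smul, smul_dotProduct] }

@[simp] lemma bilinCLM_apply {n : ℕ} (A : Matrix (Fin n) (Fin n) ℝ) (u v : Fin n → ℝ) :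
    bilinCLM A u v = A.mulVec u ⬝ᵥ v := rfl

/-- Gradient of the quadratic form `Y ↦ ½ Yᵀ A Y` for symmetric `A`. -/
lemma hasFDerivAt_half_quadratic {n : ℕ} (A : Matrix (Fin n) (Fin n) ℝ)
    (hA : Aᵀ = A) (x : Fin n → ℝ) :
    HasFDerivAt (fun Y : Fin n → ℝ => (1/2) * (Y ⬝ᵥ A.mulVec Y)) (dotCLM (A.mulVec x)) x := by
  have hb : IsBoundedBilinearMap ℝ fun p : (Fin n → ℝ) × (Fin n → ℝ) => bilinCLM A p.1 p.2 :=
    (bilinCLM A).isBoundedBilinearMap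
  have h1 : HasFDerivAt (fun p : (Fin n → ℝ) × (Fin n → ℝ) => bilinCLM A p.1 p.2)
      (hb.deriv (x, x)) (x, x) := hb.hasFDerivAt _
  have h2 : HasFDerivAt (fun Y : Fin n → ℝ => (Y, Y))
      ((ContinuousLinearMap.id ℝ (Fin n → ℝ)).prod (ContinuousLinearMap.id ℝ (Fin n → ℝ))) x :=
    (hasFDerivAt_id x).prodMk (hasFDerivAt_id x)
  have h3 := ((HasFDerivAt.comp (f := fun Y : Fin n → ℝ => (Y, Y)) x h1 h2)).const_mul (1/2 : ℝ)
  have hfun : (fun Y : Fin n → ℝ => (1/2) * (Y ⬝ᵥ A.mulVec Y))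
      = fun Y : Fin n → ℝ =>
        (1/2 : ℝ) * ((fun p : (Fin n → ℝ) × (Fin n → ℝ) => bilinCLM A p.1 p.2)
          ((fun Y : Fin n → ℝ => (Y, Y)) Y)) := by
    funext Y
    simp [dotProduct_comm]
  have hL : dotCLM (A.mulVec x)
      = (1/2 : ℝ) • ((hb.deriv (x, x)).comp
        ((ContinuousLinearMap.id ℝ (Fin n → ℝ)).prod (ContinuousLinearMap.id ℝ (Fin n → ℝ)))) := by
    ext v
    have hsymm : A.mulVec v ⬝ᵥ x = A.mulVec x ⬝ᵥ v := by
      rw [dotProduct_comm, Matrix.dotProduct_mulVec, ← Matrix.mulVec_transpose, hA]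
    simp [IsBoundedBilinearMap.deriv_apply, hsymm]
    ring
  rw [hfun, hL]
  exact h3

/-- A positive semidefinite real matrix with unit determinant is positive definite. -/
lemma posDef_of_posSemidef_isUnit {n : ℕ} {A : Matrix (Fin n) (Fin n) ℝ}
    (hA : A.PosSemidef) (h : IsUnit A.det) : A.PosDef := by
  exact hA.posDef_iff_isUnit.mpr ((Matrix.isUnit_iff_isUnit_det A).mpr h)

/-- If `M, Q` are positive definite and commute, then `M⁻¹ * Q` is positive definite. -/
lemma posDef_inv_mul {n : ℕ} {M Q : Matrix (Fin n) (Fin n) ℝ}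
    (hM : M.PosDef) (hQ : Q.PosDef) (hMQ : M * Q = Q * M) : (M⁻¹ * Q).PosDef := by
  have hMdet : IsUnit M.det := hM.det_pos.ne'.isUnit
  have hMi : M⁻¹ * M = 1 := Matrix.nonsing_inv_mul M hMdet
  have hMi' : M * M⁻¹ = 1 := Matrix.mul_nonsing_inv M hMdet
  have hMA : M * (M⁻¹ * Q) = Q := by rw [← Matrix.mul_assoc, hMi', Matrix.one_mul]
  have hQMi : Q * M⁻¹ = M⁻¹ * Q := by
    calc Q * M⁻¹ = M⁻¹ * (M * Q) * M⁻¹ := by rw [← Matrix.mul_assoc, hMi, Matrix.one_mul]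
    _ = M⁻¹ * (Q * M) * M⁻¹ := by rw [hMQ]
    _ = M⁻¹ * Q * (M * M⁻¹) := by rw [Matrix.mul_assoc, Matrix.mul_assoc, Matrix.mul_assoc]
    _ = M⁻¹ * Q := by rw [hMi', Matrix.mul_one]
  have hMsymm : Mᵀ = M := hM.isHermitian
  have hQsymm : Qᵀ = Q := hQ.isHermitian
  have hAH : (M⁻¹ * Q).IsHermitian := by
    show (M⁻¹ * Q)ᴴ = M⁻¹ * Q
    rw [conjTranspose_mul, conjTranspose_nonsing_inv]
    show Qᵀ * (Mᵀ)⁻¹ = M⁻¹ * Q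
    rw [hQsymm, hMsymm, hQMi]
  have heig : ∀ i, 0 ≤ hAH.eigenvalues i := by
    intro i
    set v : Fin n → ℝ := ⇑(hAH.eigenvectorBasis i) with hv
    have hv0 : v ≠ 0 := by
      have := hAH.eigenvectorBasis.orthonormal.ne_zero i
      intro hc
      apply this
      exact (WithLp.ofLp_eq_zero 2).mp hc
    have heq : (M⁻¹ * Q) *ᵥ v = hAH.eigenvalues i • v := hAH.mulVec_eigenvectorBasis i
    have hQv : Q *ᵥ v = hAH.eigenvalues i • (M *ᵥ v) := by
      calc Q *ᵥ v = (M * (M⁻¹ * Q)) *ᵥ v := by rw [hMA]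
      _ = M *ᵥ ((M⁻¹ * Q) *ᵥ v) := by rw [← Matrix.mulVec_mulVec]
      _ = M *ᵥ (hAH.eigenvalues i • v) := by rw [heq]
      _ = hAH.eigenvalues i • (M *ᵥ v) := by rw [Matrix.mulVec_smul]
    have h1 : (0:ℝ) < v ⬝ᵥ Q *ᵥ v := by simpa using hQ.dotProduct_mulVec_pos hv0
    have h2 : (0:ℝ) < v ⬝ᵥ M *ᵥ v := by simpa using hM.dotProduct_mulVec_pos hv0
    have h3 : v ⬝ᵥ Q *ᵥ v = hAH.eigenvalues i * (v ⬝ᵥ M *ᵥ v) := by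
      rw [hQv, dotProduct_smul]
      simp
    nlinarith
  have hPSD : (M⁻¹ * Q).PosSemidef := Matrix.IsHermitian.posSemidef_iff_eigenvalues_nonneg hAH |>.mpr heig
  have hdet : IsUnit (M⁻¹ * Q).det := by
    rw [Matrix.det_mul, Matrix.det_nonsing_inv]
    have h1 : Ring.inverse M.det ≠ 0 := by
      rw [Ring.inverse_eq_inv]
      exact inv_ne_zero hM.det_pos.ne'
    exact (mul_ne_zero h1 hQ.det_pos.ne').isUnit
  exact posDef_of_posSemidef_isUnit hPSD hdet

/-- **State transformation to the classical explicit port-Hamiltonian form.**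
For `M, Q` symmetric positive definite and commuting, `J` skew-symmetric, `R`
symmetric positive semidefinite: (i) `M⁻¹Q` is symmetric positive definite and
`H̃(X̃) = ½ X̃ᵀ M⁻¹ Q X̃` has gradient `∇H̃(X̃) = M⁻¹ Q X̃`; (ii) if
`M X' = (J - R) Q X + G U`, then the transformed state `X̃ = M X` satisfies
`X̃' = (J - R) ∇H̃(X̃) + G U`, the output satisfies
`Gᵀ ∇H̃(X̃) = Gᵀ Q X`, and `H̃(X̃) = ½ Xᵀ Q M X` is the original Hamiltonian. -/
theorem discrete_pH_state_transformation
    {n m : ℕ} (M Q J R : Matrix (Fin n) (Fin n) ℝ) (G : Matrix (Fin n) (Fin m) ℝ)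
    (hM : M.PosDef) (hQ : Q.PosDef) (hMQ : M * Q = Q * M)
    (hJ : Jᵀ = -J) (hR : R.PosSemidef)
    (U : ℝ → Fin m → ℝ) (X : ℝ → Fin n → ℝ) (hX : Differentiable ℝ X)
    (hode : ∀ t, M.mulVec (deriv X t)
      = (J - R).mulVec (Q.mulVec (X t)) + G.mulVec (U t)) :
    ((M⁻¹ * Q).PosDef
      ∧ ∀ Xt : Fin n → ℝ,
          HasFDerivAt (fun Y : Fin n → ℝ => (1/2) * (Y ⬝ᵥ (M⁻¹ * Q).mulVec Y))
            (dotCLM ((M⁻¹ * Q).mulVec Xt)) Xt)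
    ∧ (∀ t,
        HasDerivAt (fun s => M.mulVec (X s))
          ((J - R).mulVec ((M⁻¹ * Q).mulVec (M.mulVec (X t))) + G.mulVec (U t)) t
        ∧ Gᵀ.mulVec ((M⁻¹ * Q).mulVec (M.mulVec (X t)))
            = Gᵀ.mulVec (Q.mulVec (X t))
        ∧ (1/2) * (M.mulVec (X t) ⬝ᵥ (M⁻¹ * Q).mulVec (M.mulVec (X t)))
            = (1/2) * (X t ⬝ᵥ (Q * M).mulVec (X t))) := by
  have hApd : (M⁻¹ * Q).PosDef := posDef_inv_mul hM hQ hMQ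
  have hAsymm : (M⁻¹ * Q)ᵀ = M⁻¹ * Q := hApd.isHermitian
  have hMdet : IsUnit M.det := hM.det_pos.ne'.isUnit
  have hMi : M⁻¹ * M = 1 := Matrix.nonsing_inv_mul M hMdet
  -- key collapsing identity `(M⁻¹ Q) M = Q`
  have hAM : (M⁻¹ * Q) * M = Q := by
    rw [Matrix.mul_assoc, ← hMQ, ← Matrix.mul_assoc, hMi, Matrix.one_mul]
  have hcollapse : ∀ x : Fin n → ℝ, (M⁻¹ * Q) *ᵥ (M *ᵥ x) = Q *ᵥ x := by
    intro x
    rw [Matrix.mulVec_mulVec, hAM]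
  refine ⟨⟨hApd, fun Xt => hasFDerivAt_half_quadratic _ hAsymm Xt⟩, fun t => ?_⟩
  refine ⟨?_, ?_, ?_⟩
  · -- the ODE for the transformed state
    have hXd : HasDerivAt X (deriv X t) t := (hX t).hasDerivAt
    have hL : HasDerivAt (fun s => M *ᵥ X s) (M *ᵥ deriv X t) t := by
      have := ((Matrix.mulVecLin M).toContinuousLinearMap.hasFDerivAt).comp_hasDerivAt t hXd
      exact this
    have hd : M *ᵥ deriv X t
        = (J - R) *ᵥ ((M⁻¹ * Q) *ᵥ (M *ᵥ X t)) + G *ᵥ U t := by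
      rw [hcollapse, hode t]
    rwa [hd] at hL
  · rw [hcollapse]
  · -- the Hamiltonian
    have hMsymm : Mᵀ = M := hM.isHermitian
    have hQsymm : Qᵀ = Q := hQ.isHermitian
    rw [hcollapse]
    have : X t ⬝ᵥ (Q * M) *ᵥ X t = M *ᵥ X t ⬝ᵥ Q *ᵥ X t := by
      rw [← Matrix.mulVec_mulVec, Matrix.dotProduct_mulVec (X t) Q,
        ← Matrix.mulVec_transpose, hQsymm, dotProduct_comm]
    rw [this]
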